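/- Let n ≥ 1 and let v₁, v₂ be 0–1 vectors of length n that are not cyclic rotations of one another. Then the T-cycles through x(v₁) and through x(v₂) are disjoint: x(v₂) ≠ T^j(x(v₁)) for every j with 0 ≤ j < n. In particular, if moreover ω(v₁) = ω(v₂) and x(v₁), x(v₂) have the same denominator k in lowest terms, then D_k contains two distinct cycles with the same length invariant λ = n and the same number ω of odd elements (the repetition phenomenon). -/

import Mathlib

/-- The `3x+1` function on rationals: `T x = x/2` if the numerator of `x` is even,
and `T x = (3x+1)/2` if the numerator of `x` is odd. -/
noncomputable def T (x : ℚ) : ℚ := if Even x.num then x / 2 else (3 * x + 1) / 2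

/-- `ω(v) = v_0 + ⋯ + v_{n-1}`. -/
def omegaF {n : ℕ} (v : Fin n → ℕ) : ℕ := ∑ j, v j

/-- `ρ(v) = ∑_{j=0}^{n-1} v_j ⬝ 3^{v_{j+1} + ⋯ + v_{n-1}} ⬝ 2^j`. -/
def rhoF {n : ℕ} (v : Fin n → ℕ) : ℕ :=
  ∑ j : Fin n, v j * 3 ^ (∑ i : Fin n, if (j : ℕ) < (i : ℕ) then v i else 0) * 2 ^ (j : ℕ)

/-- `x(v) = ρ(v) / (2^n - 3^{ω(v)})`. -/
noncomputable def xF {n : ℕ} (v : Fin n → ℕ) : ℚ :=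
  (rhoF v : ℚ) / ((2 : ℚ) ^ n - (3 : ℚ) ^ omegaF v)

namespace AuxC

/-! ### Generic rational-number lemmas -/

lemma den_div_coprime (a : ℤ) (b : ℕ) (hb : b ≠ 0) (h : a.natAbs.Coprime b) :
    ((a:ℚ)/(b:ℚ)).den = b := by
  have : ((Rat.mk' a b hb h : ℚ)) = (a:ℚ)/b := by
    rw [Rat.mk_eq_divInt, Rat.divInt_eq_div]; norm_num
  rw [← this]

lemma cross (a b : ℤ) (hb : b ≠ 0) :
    a * (((a:ℚ)/(b:ℚ)).den : ℤ) = ((a:ℚ)/(b:ℚ)).num * b := by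
  have hbq : (b:ℚ) ≠ 0 := Int.cast_ne_zero.mpr hb
  have h1 : ((a:ℚ)/(b:ℚ)) = (((a:ℚ)/(b:ℚ)).num : ℚ) / ((((a:ℚ)/(b:ℚ)).den : ℤ) : ℚ) := by
    push_cast [Rat.num_div_den]; rfl
  have hd : ((((a:ℚ)/(b:ℚ)).den : ℤ) : ℚ) ≠ 0 := by
    exact_mod_cast Nat.cast_ne_zero.mpr ((a:ℚ)/(b:ℚ)).den_nz
  field_simp at h1
  exact_mod_cast h1.trans (mul_comm _ _)

lemma den_dvd' (a b : ℤ) (hb : b ≠ 0) : (((a:ℚ)/(b:ℚ)).den : ℤ) ∣ b := by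
  have h := cross a b hb
  have hcop : (((a:ℚ)/(b:ℚ)).num).natAbs.Coprime ((a:ℚ)/(b:ℚ)).den := Rat.reduced _
  have hdvd : (((a:ℚ)/(b:ℚ)).den : ℤ) ∣ ((a:ℚ)/(b:ℚ)).num * b := ⟨a, by linarith [h]⟩
  have hc2 : IsCoprime (((a:ℚ)/(b:ℚ)).den : ℤ) ((a:ℚ)/(b:ℚ)).num := by
    rw [Int.isCoprime_iff_gcd_eq_one, Int.gcd]; simpa [Nat.coprime_comm] using hcop
  exact hc2.dvd_of_dvd_mul_left hdvd

lemma num_even_iff (a b : ℤ) (hb : Odd b) : (Even ((a:ℚ)/(b:ℚ)).num ↔ Even a) := by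
  have hb0 : b ≠ 0 := by rintro rfl; simp [Int.odd_iff] at hb
  have h := cross a b hb0
  have hden : Odd ((((a:ℚ)/(b:ℚ)).den) : ℤ) := by
    rcases (den_dvd' a b hb0) with ⟨c, hc⟩
    rcases Int.even_or_odd (((a:ℚ)/(b:ℚ)).den : ℤ) with he | ho
    · exact absurd hb (Int.not_odd_iff_even.mpr (hc ▸ he.mul_right c))
    · exact ho
  constructor
  · intro hnum
    have h2 : Even (a * (((a:ℚ)/(b:ℚ)).den : ℤ)) := h ▸ hnum.mul_right b
    rcases Int.even_or_odd a with ha | ha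
    · exact ha
    · exact absurd h2 (Int.not_even_iff_odd.mpr (ha.mul hden))
  · intro ha
    have h2 : Even (((a:ℚ)/(b:ℚ)).num * b) := h ▸ ha.mul_right _
    rcases Int.even_or_odd ((a:ℚ)/(b:ℚ)).num with hn | hn
    · exact hn
    · exact absurd h2 (Int.not_even_iff_odd.mpr (hn.mul hb))

lemma den_T (x : ℚ) (hodd : Odd x.den) (h3 : ¬ (3 ∣ x.den)) : (T x).den = x.den := by
  have hd0 : (x.den : ℚ) ≠ 0 := by exact_mod_cast x.den_nz
  have hnum : x * (x.den:ℚ) = (x.num:ℚ) := Rat.mul_den_eq_num x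
  unfold T
  split_ifs with he
  · obtain ⟨c, hc⟩ := he
    have hcop : c.natAbs.Coprime x.den := Nat.Coprime.coprime_dvd_left
      (Int.natAbs_dvd_natAbs.mpr ⟨2, by rw [hc]; ring⟩) x.reduced
    have hcq : (x.num:ℚ) = c + c := by exact_mod_cast congrArg (Int.cast : ℤ → ℚ) hc
    have hx2 : x / 2 = (c:ℚ) / (x.den:ℚ) := by
      rw [div_eq_div_iff two_ne_zero hd0]; linear_combination hnum + hcq
    rw [hx2, den_div_coprime c x.den x.den_nz hcop]
  · have h2 : (2:ℤ) ∣ 3 * x.num + x.den := by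
      rcases Int.not_even_iff_odd.mp he with ⟨a, ha⟩; rcases hodd with ⟨b, hb⟩
      refine ⟨3*a + b + 2, ?_⟩
      have hbz : (x.den : ℤ) = 2*b + 1 := by exact_mod_cast hb
      rw [ha, hbz]; ring
    obtain ⟨c, hc⟩ := h2
    have hcop : c.natAbs.Coprime x.den := by
      by_contra hcon
      obtain ⟨p, hp, hp1, hp2⟩ := Nat.Prime.not_coprime_iff_dvd.mp hcon
      have hpz1 : (p:ℤ) ∣ c :=
        (Int.natCast_dvd_natCast.mpr hp1).trans (Int.natAbs_dvd.mpr dvd_rfl)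
      have hpd : (p:ℤ) ∣ (x.den:ℤ) := Int.natCast_dvd_natCast.mpr hp2
      have hp3num : (p:ℤ) ∣ 3 * x.num := by
        have hdd : (p:ℤ) ∣ 2*c - x.den := dvd_sub (hpz1.mul_left 2) hpd
        rwa [show (2*c - (x.den:ℤ)) = 3*x.num by omega] at hdd
      have hpInt : Prime (p:ℤ) := Int.prime_iff_natAbs_prime.mpr (by simpa using hp)
      rcases hpInt.dvd_mul.mp hp3num with h3p | hpnum
      · have hpd3 : p ∣ 3 := by exact_mod_cast h3p
        have : p = 3 := (Nat.prime_dvd_prime_iff_eq hp (by norm_num)).mp hpd3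
        exact h3 (this ▸ hp2)
      · have hpn : p ∣ x.num.natAbs := by
          rw [← Int.natAbs_natCast p]; exact Int.natAbs_dvd_natAbs.mpr hpnum
        have hg : p ∣ Nat.gcd x.num.natAbs x.den := Nat.dvd_gcd hpn hp2
        rw [Nat.Coprime.gcd_eq_one x.reduced] at hg
        exact Nat.Prime.one_lt hp |>.ne' (Nat.dvd_one.mp hg)
    have hcq : 3*(x.num:ℚ) + (x.den:ℚ) = 2*c := by
      exact_mod_cast congrArg (Int.cast : ℤ → ℚ) hc
    have hx2 : (3*x+1) / 2 = (c:ℚ) / (x.den:ℚ) := by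
      rw [div_eq_div_iff two_ne_zero hd0]; linear_combination 3*hnum + hcq
    rw [hx2, den_div_coprime c x.den x.den_nz hcop]

/-! ### Combinatorial identities for `ρ` -/

def tl (w : ℕ → ℕ) (a n : ℕ) : ℕ := ∑ i ∈ Finset.Ico a n, w i
def rho' (w : ℕ → ℕ) (n : ℕ) : ℕ := ∑ j ∈ Finset.range n, w j * 3 ^ tl w (j+1) n * 2 ^ j
def om' (w : ℕ → ℕ) (n : ℕ) : ℕ := ∑ j ∈ Finset.range n, w j
def A (w : ℕ → ℕ) (m : ℕ) : ℕ := ∑ j ∈ Finset.range m, w (j+1) * 3 ^ tl w (j+2) (m+1) * 2 ^ j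

def wOf {n : ℕ} (v : Fin n → ℕ) : ℕ → ℕ :=
  fun j => if h : j % n < n then v ⟨j % n, h⟩ else 0

lemma wOf_eq {n : ℕ} (hn : 0 < n) (v : Fin n → ℕ) (j : ℕ) :
    wOf v j = v ⟨j % n, Nat.mod_lt _ hn⟩ := dif_pos _

lemma wOf_fin {n : ℕ} (v : Fin n → ℕ) (i : Fin n) : wOf v (i : ℕ) = v i := by
  have hn : 0 < n := i.pos
  rw [wOf_eq hn]
  congr 1
  exact Fin.ext (Nat.mod_eq_of_lt i.isLt)

lemma wOf_per {n : ℕ} (hn : 0 < n) (v : Fin n → ℕ) (j : ℕ) :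
    wOf v (j + n) = wOf v j := by
  rw [wOf_eq hn, wOf_eq hn]
  congr 2
  exact Nat.add_mod_right j n

lemma omegaF_eq {n : ℕ} (v : Fin n → ℕ) : omegaF v = om' (wOf v) n := by
  rw [omegaF, om', ← Fin.sum_univ_eq_sum_range]
  exact Finset.sum_congr rfl (fun i _ => (wOf_fin v i).symm)

lemma tl_eq {n : ℕ} (v : Fin n → ℕ) (j : Fin n) :
    (∑ i : Fin n, if (j : ℕ) < (i : ℕ) then v i else 0) = tl (wOf v) ((j:ℕ)+1) n := by
  rw [tl]
  rw [show Finset.Ico ((j:ℕ)+1) n = Finset.filter (fun i => (j:ℕ) < i) (Finset.range n) by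
    ext x; simp [Finset.mem_Ico, Finset.mem_filter, Finset.mem_range]; omega]
  rw [Finset.sum_filter, ← Fin.sum_univ_eq_sum_range]
  exact Finset.sum_congr rfl (fun i _ => by rw [wOf_fin v i])

lemma rhoF_eq {n : ℕ} (v : Fin n → ℕ) : rhoF v = rho' (wOf v) n := by
  rw [rhoF, rho', ← Fin.sum_univ_eq_sum_range]
  refine Finset.sum_congr rfl (fun i _ => ?_)
  rw [wOf_fin v i, tl_eq v i]

lemma rho'_split (w : ℕ → ℕ) (m : ℕ) :
    rho' w (m+1) = w 0 * 3 ^ tl w 1 (m+1) + 2 * A w m := by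
  rw [rho', Finset.sum_range_succ', A, Finset.mul_sum]
  simp only [pow_succ, pow_zero, one_mul, mul_one]
  rw [add_comm]
  congr 1
  refine Finset.sum_congr rfl (fun j _ => ?_)
  ring

lemma om'_split (w : ℕ → ℕ) (m : ℕ) : om' w (m+1) = w 0 + tl w 1 (m+1) := by
  rw [om', Finset.sum_range_succ', tl, add_comm]
  congr 1
  rw [Finset.sum_Ico_eq_sum_range]
  simp [add_comm]

lemma rho'_shift (w : ℕ → ℕ) (m : ℕ) (hper : w (m+1) = w 0) :
    rho' (fun j => w (j+1)) (m+1) = 3 ^ (w 0) * A w m + w 0 * 2 ^ m := by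
  rw [rho', Finset.sum_range_succ]
  have hlast : tl (fun j => w (j+1)) (m+1) (m+1) = 0 := by
    rw [tl, Finset.Ico_self, Finset.sum_empty]
  rw [hlast, hper, A, Finset.mul_sum]
  congr 1
  · refine Finset.sum_congr rfl (fun j hj => ?_)
    have hj' : j < m := Finset.mem_range.mp hj
    have htl : tl (fun i => w (i+1)) (j+1) (m+1) = tl w (j+2) (m+1) + w 0 := by
      rw [tl, tl, Finset.sum_Ico_eq_sum_range, Finset.sum_Ico_eq_sum_range, ← hper]
      rw [show m + 1 - (j+1) = (m + 1 - (j+2)) + 1 by omega, Finset.sum_range_succ]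
      congr 1
      · refine Finset.sum_congr rfl (fun i _ => ?_)
        congr 1; omega
      · congr 1; omega
    rw [htl, pow_add]
    ring
  · ring

lemma key_identity (w : ℕ → ℕ) (m : ℕ) (hper : w (m+1) = w 0) (h01 : w 0 = 0 ∨ w 0 = 1) :
    2 * (rho' (fun j => w (j+1)) (m+1) : ℤ) =
      (1 + 2 * w 0) * rho' w (m+1) + w 0 * (2^(m+1) - 3 ^ om' w (m+1)) := by
  have h1 := rho'_split w m
  have h2 := rho'_shift w m hper
  have h3 := om'_split w m
  rcases h01 with h0 | h0 <;>
  · rw [h1, h2, h3, h0]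
    push_cast
    ring

lemma rho'_even_iff (w : ℕ → ℕ) (m : ℕ) :
    Even (rho' w (m+1)) ↔ Even (w 0) := by
  rw [rho'_split]
  simp [Nat.even_add, Nat.even_mul, Nat.even_pow, parity_simps]

lemma om'_shift (w : ℕ → ℕ) (m : ℕ) (hper : w (m+1) = w 0) :
    om' (fun j => w (j+1)) (m+1) = om' w (m+1) := by
  rw [om', om', Finset.sum_range_succ, hper, Finset.sum_range_succ']

/-! ### Rotations -/

def rot {n : ℕ} (m : ℕ) (v : Fin n → ℕ) : Fin n → ℕ := fun i => wOf v ((i:ℕ) + m)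

lemma wOf_rot {n : ℕ} (hn : 0 < n) (m : ℕ) (v : Fin n → ℕ) (j : ℕ) :
    wOf (rot m v) j = wOf v (j + m) := by
  rw [wOf_eq hn, rot]
  show wOf v ((j % n) + m) = wOf v (j + m)
  rw [wOf_eq hn, wOf_eq hn]
  congr 2
  simp [Nat.add_mod]

lemma rot_zero {n : ℕ} (v : Fin n → ℕ) : rot 0 v = v := by
  funext i
  rw [rot]
  simpa using wOf_fin v i

lemma rot_n {n : ℕ} (hn : 0 < n) (v : Fin n → ℕ) : rot n v = v := by
  funext i
  rw [rot, wOf_per hn, wOf_fin]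

lemma rot_rot {n : ℕ} (hn : 0 < n) (a b : ℕ) (v : Fin n → ℕ) :
    rot a (rot b v) = rot (b + a) v := by
  funext i
  rw [rot, rot, wOf_rot hn]
  congr 1
  omega

lemma rot_01 {n : ℕ} (hn : 0 < n) (m : ℕ) (v : Fin n → ℕ)
    (h01 : ∀ j, v j = 0 ∨ v j = 1) (j : Fin n) : rot m v j = 0 ∨ rot m v j = 1 := by
  rw [rot, wOf_eq hn]
  exact h01 _

lemma wOf_rot_fun {n : ℕ} (hn : 0 < n) (v : Fin n → ℕ) :
    wOf (rot 1 v) = fun j => wOf v (j + 1) := by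
  funext j; exact wOf_rot hn 1 v j

lemma omegaF_rot1 {n : ℕ} (hn : 0 < n) (v : Fin n → ℕ) :
    omegaF (rot 1 v) = omegaF v := by
  obtain ⟨m, rfl⟩ : ∃ m, n = m + 1 := ⟨n - 1, by omega⟩
  rw [omegaF_eq, omegaF_eq, wOf_rot_fun hn]
  exact om'_shift (wOf v) m (by simpa using wOf_per hn v 0)

/-! ### Rational-level lemmas -/

lemma Dz_odd (n k : ℕ) (hn : 0 < n) : Odd ((2:ℤ)^n - 3^k) := by
  have h2 : Even ((2:ℤ)^n) := by
    obtain ⟨m, rfl⟩ : ∃ m, n = m + 1 := ⟨n - 1, by omega⟩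
    exact ⟨2^m, by ring⟩
  have h3 : Odd ((3:ℤ)^k) := Odd.pow ⟨1, by ring⟩
  exact h2.sub_odd h3

lemma Dz_ne (n k : ℕ) (hn : 0 < n) : ((2:ℤ)^n - 3^k) ≠ 0 := by
  intro h
  have := Dz_odd n k hn
  rw [h] at this
  simp [Int.odd_iff] at this

lemma xF_div {n : ℕ} (v : Fin n → ℕ) :
    xF v = (((rhoF v : ℤ)):ℚ) / ((((2:ℤ)^n - 3^(omegaF v)) : ℤ) : ℚ) := by
  rw [xF]
  push_cast
  rfl

lemma xF_num_even {n : ℕ} (hn : 0 < n) (v : Fin n → ℕ) :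
    Even (xF v).num ↔ Even (wOf v 0) := by
  obtain ⟨m, rfl⟩ : ∃ m, n = m + 1 := ⟨n - 1, by omega⟩
  rw [xF_div, num_even_iff _ _ (Dz_odd _ _ hn)]
  rw [Int.even_coe_nat, rhoF_eq]
  exact rho'_even_iff (wOf v) m

lemma T_xF {n : ℕ} (hn : 0 < n) (v : Fin n → ℕ) (h01 : ∀ j, v j = 0 ∨ v j = 1) :
    T (xF v) = xF (rot 1 v) := by
  obtain ⟨m, rfl⟩ : ∃ m, n = m + 1 := ⟨n - 1, by omega⟩
  set w : ℕ → ℕ := wOf v with hw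
  have hper : w (m+1) = w 0 := by simpa using wOf_per hn v 0
  have h01w : w 0 = 0 ∨ w 0 = 1 := by rw [hw, wOf_eq hn]; exact h01 _
  have hom : omegaF (rot 1 v) = omegaF v := omegaF_rot1 hn v
  have hrho2 : rhoF (rot 1 v) = rho' (fun j => w (j+1)) (m+1) := by
    rw [rhoF_eq, wOf_rot_fun hn]
  have hkey : 2 * (rho' (fun j => w (j+1)) (m+1) : ℤ) =
      (1 + 2 * w 0) * rho' w (m+1) + w 0 * (2^(m+1) - 3 ^ om' w (m+1)) :=
    key_identity w m hper h01w
  have hrho1 : rhoF v = rho' w (m+1) := rhoF_eq v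
  have homv : omegaF v = om' w (m+1) := omegaF_eq v
  have hD : ((2:ℚ)^(m+1) - 3^(omegaF v)) ≠ 0 := by
    have h := Dz_ne (m+1) (omegaF v) hn
    intro hc
    apply h
    have : (((2:ℤ)^(m+1) - 3^(omegaF v) : ℤ) : ℚ) = 0 := by push_cast; exact hc
    exact_mod_cast this
  have hxv : xF v = (rhoF v : ℚ) / ((2:ℚ)^(m+1) - 3^(omegaF v)) := rfl
  have hxr : xF (rot 1 v) = (rhoF (rot 1 v) : ℚ) / ((2:ℚ)^(m+1) - 3^(omegaF v)) := by
    rw [xF, hom]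
  have hkeyQ : 2 * (rhoF (rot 1 v) : ℚ) =
      (1 + 2 * (w 0 : ℚ)) * (rhoF v : ℚ) + (w 0 : ℚ) * (2^(m+1) - 3 ^ (omegaF v)) := by
    have := congrArg (Int.cast : ℤ → ℚ) hkey
    push_cast at this
    rw [hrho2, hrho1, homv]
    push_cast
    linarith [this]
  have hparity : Even (xF v).num ↔ Even (w 0) := xF_num_even hn v
  unfold T
  split_ifs with he
  · -- numerator even, so w 0 = 0
    have hw0 : w 0 = 0 := by
      rcases h01w with h | h
      · exact h
      · exfalso; rw [hparity, h] at he
        exact (by simp [Nat.even_iff] : ¬ Even 1) he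
    rw [hxv, hxr]
    rw [hw0] at hkeyQ
    push_cast at hkeyQ
    field_simp
    linear_combination (-1:ℚ) * hkeyQ
  · -- numerator odd, so w 0 = 1
    have hw0 : w 0 = 1 := by
      rcases h01w with h | h
      · exfalso; rw [hparity, h] at he; exact he ⟨0, rfl⟩
      · exact h
    rw [hxv, hxr]
    rw [hw0] at hkeyQ
    push_cast at hkeyQ
    field_simp
    linear_combination (-1:ℚ) * hkeyQ

lemma T_iter {n : ℕ} (hn : 0 < n) (v : Fin n → ℕ) (h01 : ∀ j, v j = 0 ∨ v j = 1)
    (j : ℕ) : T^[j] (xF v) = xF (rot j v) := by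
  induction j with
  | zero => rw [Function.iterate_zero_apply, rot_zero]
  | succ j ih =>
    rw [Function.iterate_succ_apply', ih, T_xF hn (rot j v) (rot_01 hn j v h01),
      rot_rot hn 1 j v]

lemma xF_inj {n : ℕ} (hn : 0 < n) (v w : Fin n → ℕ)
    (h01v : ∀ j, v j = 0 ∨ v j = 1) (h01w : ∀ j, w j = 0 ∨ w j = 1)
    (h : xF v = xF w) : v = w := by
  funext i
  have hi := congrArg (T^[(i:ℕ)]) h
  rw [T_iter hn v h01v, T_iter hn w h01w] at hi
  have hv : Even (xF (rot (i:ℕ) v)).num ↔ Even (v i) := by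
    rw [xF_num_even hn, wOf_rot hn, Nat.zero_add, wOf_fin]
  have hw : Even (xF (rot (i:ℕ) w)).num ↔ Even (w i) := by
    rw [xF_num_even hn, wOf_rot hn, Nat.zero_add, wOf_fin]
  rw [hi, hw] at hv
  rcases h01v i with h1 | h1 <;> rcases h01w i with h2 | h2 <;>
    rw [h1, h2] at hv ⊢ <;> first | rfl | (exfalso; revert hv; decide)

lemma T_iter_mod {n : ℕ} (hn : 0 < n) (v : Fin n → ℕ) (h01 : ∀ j, v j = 0 ∨ v j = 1)
    (j : ℕ) : T^[j] (xF v) = T^[j % n] (xF v) := by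
  rw [T_iter hn v h01, T_iter hn v h01]
  congr 1
  funext i
  rw [rot, rot, wOf_eq hn, wOf_eq hn]
  congr 2
  simp [Nat.add_mod]

end AuxC

/-- If `v₁` and `v₂` are `0-1` vectors of length `n` which are not cyclic rotations
of one another, then the `T`-cycles through `x(v₁)` and `x(v₂)` are disjoint; in
particular, if moreover `ω(v₁) = ω(v₂)` and `x(v₁)`, `x(v₂)` both have denominator
`k`, then `D_k` contains two distinct cycles with the same invariants `λ = n` and
`ω` (the repetition phenomenon). -/
theorem stmt_16 (n : ℕ) (hn : 1 ≤ n) (v₁ v₂ : Fin n → ℕ)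
    (h01 : (∀ j, v₁ j = 0 ∨ v₁ j = 1) ∧ (∀ j, v₂ j = 0 ∨ v₂ j = 1))
    (hrot : ∀ m : ℕ,
      (fun i : Fin n => v₁ ⟨((i : ℕ) + m) % n, Nat.mod_lt _ (by omega)⟩) ≠ v₂) :
    (∀ j : ℕ, j < n → T^[j] (xF v₁) ≠ xF v₂) ∧
    (∀ k : ℕ, omegaF v₁ = omegaF v₂ → (xF v₁).den = k → (xF v₂).den = k →
      {y : ℚ | ∃ j : ℕ, T^[j] (xF v₁) = y} ≠ {y : ℚ | ∃ j : ℕ, T^[j] (xF v₂) = y} ∧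
      (∀ y ∈ {y : ℚ | ∃ j : ℕ, T^[j] (xF v₁) = y}, y.den = k) ∧
      (∀ y ∈ {y : ℚ | ∃ j : ℕ, T^[j] (xF v₂) = y}, y.den = k)) := by
  obtain ⟨h01a, h01b⟩ := h01
  have hn0 : 0 < n := hn
  have part1 : ∀ j : ℕ, j < n → T^[j] (xF v₁) ≠ xF v₂ := by
    intro j hj heq
    have h1 : xF (AuxC.rot j v₁) = xF v₂ := by
      rw [← AuxC.T_iter hn0 v₁ h01a]; exact heq
    have h2 : AuxC.rot j v₁ = v₂ :=
      AuxC.xF_inj hn0 _ _ (AuxC.rot_01 hn0 j v₁ h01a) h01b h1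
    apply hrot j
    funext i
    rw [← h2]
    simp only [AuxC.rot]
    rw [AuxC.wOf_eq hn0]
  refine ⟨part1, ?_⟩
  intro k hω hden1 hden2
  have hωpos : 0 < omegaF v₁ := by
    rcases Nat.eq_zero_or_pos (omegaF v₁) with h0 | h
    swap
    · exact h
    exfalso
    have hz1 : ∀ i, v₁ i = 0 := fun i =>
      Finset.sum_eq_zero_iff.mp (h0 : (∑ j, v₁ j) = 0) i (Finset.mem_univ i)
    have h0' : (∑ j, v₂ j) = 0 := (hω ▸ h0 : omegaF v₂ = 0)
    have hz2 : ∀ i, v₂ i = 0 := fun i =>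
      Finset.sum_eq_zero_iff.mp h0' i (Finset.mem_univ i)
    apply hrot 0
    funext i
    simp [hz1, hz2]
  have hdvd1 : ((xF v₁).den : ℤ) ∣ ((2:ℤ)^n - 3^(omegaF v₁)) := by
    rw [AuxC.xF_div]
    exact AuxC.den_dvd' _ _ (AuxC.Dz_ne n _ hn0)
  have hdvd2 : ((xF v₂).den : ℤ) ∣ ((2:ℤ)^n - 3^(omegaF v₁)) := by
    rw [AuxC.xF_div, hω]
    exact AuxC.den_dvd' _ _ (AuxC.Dz_ne n _ hn0)
  have hoddk : ∀ x : ℚ, x.den = k → ((x.den : ℤ) ∣ ((2:ℤ)^n - 3^(omegaF v₁))) → Odd k := by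
    intro x hx hdvd
    rw [← hx]
    rcases hdvd with ⟨c, hc⟩
    have hD := AuxC.Dz_odd n (omegaF v₁) hn0
    rw [hc] at hD
    rcases Int.even_or_odd ((x.den : ℤ)) with he | ho
    · exact absurd hD (Int.not_odd_iff_even.mpr (he.mul_right c))
    · exact_mod_cast ho
  have hk_odd : Odd k := hoddk _ hden1 hdvd1
  have hk_not3 : ¬ (3 ∣ k) := by
    intro h3k
    have h3den : (3:ℤ) ∣ ((xF v₁).den : ℤ) := by
      exact_mod_cast (show (3:ℕ) ∣ (xF v₁).den by rw [hden1]; exact h3k)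
    have h3D : (3:ℤ) ∣ ((2:ℤ)^n - 3^(omegaF v₁)) := h3den.trans hdvd1
    have h33 : (3:ℤ) ∣ 3^(omegaF v₁) := dvd_pow_self 3 hωpos.ne'
    have h32 : (3:ℤ) ∣ 2^n := by omega
    have h2 : (3:ℤ) ∣ 2 := Int.prime_three.dvd_of_dvd_pow h32
    norm_num at h2
  have hinv : ∀ (x : ℚ), x.den = k → ∀ j, (T^[j] x).den = k := by
    intro x hx j
    induction j with
    | zero => simpa using hx
    | succ j ih =>
      rw [Function.iterate_succ_apply',
        AuxC.den_T (T^[j] x) (by rw [ih]; exact hk_odd) (by rw [ih]; exact hk_not3)]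
      exact ih
  refine ⟨?_, ?_, ?_⟩
  · intro hSeq
    have hmem : xF v₂ ∈ {y : ℚ | ∃ j : ℕ, T^[j] (xF v₁) = y} := by
      rw [hSeq]; exact ⟨0, rfl⟩
    obtain ⟨j, hj⟩ := hmem
    have hmod := AuxC.T_iter_mod hn0 v₁ h01a j
    exact part1 (j % n) (Nat.mod_lt _ hn0) (by rw [← hmod]; exact hj)
  · rintro y ⟨j, rfl⟩; exact hinv _ hden1 j
  · rintro y ⟨j, rfl⟩; exact hinv _ hden2 j
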